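/- Let ρ ≠ 0 and r₂ satisfy r₂ + 1 - 2|ρ| > 0. If a sequence (r_k)_{k≥0} satisfies r₀ = 1, r₁ = ρ, (1+r₂) r_k = ρ(r_{k-1} + r_{k+1}) for all k ≥ 1, and |r_k| ≤ 1 for all k, then r_k → 0 as k → ∞ and r_k² < 1 for all k > 2. -/

import Mathlib

theorem stmt_1 (ρ r₂ : ℝ) (r : ℕ → ℝ)
    (hρ : ρ ≠ 0) (hr3 : r₂ + 1 - 2 * |ρ| > 0)
    (h0 : r 0 = 1) (h1 : r 1 = ρ) (h2 : r 2 = r₂)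
    (hrec : ∀ k : ℕ, 1 ≤ k → (1 + r₂) * r k = ρ * (r (k - 1) + r (k + 1)))
    (hbd : ∀ k, |r k| ≤ 1) :
    Filter.Tendsto r Filter.atTop (nhds 0) ∧ ∀ k, 2 < k → (r k) ^ 2 < 1 := by
  have hρpos : (0:ℝ) < |ρ| := abs_pos.mpr hρ
  set s : ℝ := (1 + r₂) / ρ with hs_def
  have h1r2 : (0:ℝ) < 1 + r₂ := by
    have := abs_nonneg ρ; linarith
  have hs_abs : |s| > 2 := by
    rw [hs_def, abs_div, abs_of_pos h1r2, gt_iff_lt, lt_div_iff₀ hρpos]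
    linarith
  have hs2 : s ^ 2 - 4 > 0 := by
    have : (2:ℝ) * 2 < |s| * |s| := by
      nlinarith [abs_nonneg s]
    nlinarith [sq_abs s]
  set t : ℝ := Real.sqrt (s ^ 2 - 4) with ht_def
  have ht0 : 0 ≤ t := Real.sqrt_nonneg _
  have ht : t ^ 2 = s ^ 2 - 4 := Real.sq_sqrt (le_of_lt hs2)
  have htlt : t < |s| := by
    nlinarith [abs_nonneg s, sq_abs s]
  -- pick the roots c (small) and d (big) of x^2 - s x + 1 = 0
  obtain ⟨c, d, hsum, hcd, hd⟩ :
      ∃ c d : ℝ, c + d = s ∧ c * d = 1 ∧ 1 < |d| := by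
    rcases lt_or_gt_of_ne (fun h : s = 0 => by simp [h] at hs_abs; linarith) with hneg | hpos
    · refine ⟨(s + t) / 2, (s - t) / 2, by ring, by nlinarith, ?_⟩
      have hsval : |s| = -s := abs_of_neg hneg
      have h : (s - t) / 2 < -1 := by nlinarith
      rw [lt_abs]; right; linarith
    · refine ⟨(s - t) / 2, (s + t) / 2, by ring, by nlinarith, ?_⟩
      have hsval : |s| = s := abs_of_pos hpos
      have : 1 < (s + t) / 2 := by nlinarith
      exact lt_of_lt_of_le this (le_abs_self _)
  have hc : |c| < 1 := by
    have h1 : |c| * |d| = 1 := by rw [← abs_mul, hcd, abs_one]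
    nlinarith [abs_nonneg c]
  -- solved-form recurrence
  have hrec' : ∀ k : ℕ, r (k + 2) = s * r (k + 1) - r k := by
    intro k
    have h := hrec (k + 1) (by omega)
    simp only [Nat.add_sub_cancel] at h
    rw [hs_def]
    field_simp
    linarith
  -- the auxiliary geometric sequence
  set a : ℕ → ℝ := fun k => r (k + 1) - c * r k with ha_def
  have hstep : ∀ k : ℕ, a (k + 1) = d * a k := by
    intro k
    have h := hrec' k
    simp only [ha_def]
    show r (k + 2) - c * r (k + 1) = d * (r (k + 1) - c * r k)
    linear_combination h - r (k + 1) * hsum + r k * hcd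
  have hgeom : ∀ k : ℕ, a k = d ^ k * a 0 := by
    intro k
    induction k with
    | zero => simp
    | succ n ih => rw [hstep n, ih, pow_succ]; ring
  have habd : ∀ k, |a k| ≤ 2 := by
    intro k
    have h1 := hbd (k + 1)
    have h2 := hbd k
    have h3 : |a k| ≤ |r (k + 1)| + |c * r k| := abs_sub _ _
    rw [abs_mul] at h3
    nlinarith [abs_nonneg (r k), abs_nonneg c]
  have ha0 : a 0 = 0 := by
    by_contra hne
    have hpos : 0 < |a 0| := abs_pos.mpr hne
    obtain ⟨n, hn⟩ := pow_unbounded_of_one_lt (2 / |a 0|) hd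
    have h1 : |a n| = |d| ^ n * |a 0| := by
      rw [hgeom n, abs_mul, abs_pow]
    have h2 : 2 / |a 0| * |a 0| < |d| ^ n * |a 0| := by
      exact mul_lt_mul_of_pos_right hn hpos
    rw [div_mul_cancel₀ _ (ne_of_gt hpos)] at h2
    have := habd n
    rw [h1] at this
    linarith
  have hzero : ∀ k, a k = 0 := fun k => by rw [hgeom k, ha0, mul_zero]
  have hck : ∀ k, r k = c ^ k := by
    intro k
    induction k with
    | zero => simpa using h0
    | succ n ih =>
      have := hzero n
      simp only [ha_def] at this
      have : r (n + 1) = c * r n := by linarith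
      rw [this, ih, pow_succ]; ring
  have hcρ : c = ρ := by
    have := hck 1
    simp [h1] at this
    linarith
  have hr_eq : r = fun k => c ^ k := funext hck
  constructor
  · rw [hr_eq]
    exact tendsto_pow_atTop_nhds_zero_of_abs_lt_one hc
  · intro k hk
    rw [hck k]
    have h1 : |c ^ k| < 1 := by
      rw [abs_pow]
      exact pow_lt_one₀ (abs_nonneg c) hc (by omega)
    calc (c ^ k) ^ 2 = |c ^ k| ^ 2 := by rw [sq_abs]
      _ < 1 := by nlinarith [abs_nonneg (c ^ k)]
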